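/- For the 8×8 matrices U, W, V of the A₅ example with x₀ = 1, the product T_a T_b = (UW)(V) has spectral radius equal to the largest root of det(xI - T_aT_b), and this characteristic polynomial, divided by det(xI - I₄) appropriately, specializes the Teichmüller polynomial: Θ_{A₅}(1, x) = x⁴ - 8x³ + 17x² - 8x + 1 divided appropriately equals the specialization at x₀=1. Concretely: det(xI₈ - T_aT_b)/(x-1)⁴ = x⁴ - 8x³ + 17x² - 8x + 1 where T_a and T_b are the explicit 8×8 matrices given in the paper. -/

import Mathlib

open Matrix

def TaMat : Matrix (Fin 8) (Fin 8) ℝ :=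
  !![1, 0, 0, 0, 1, 0, 0, 0;
     0, 1, 0, 0, 0, 1, 1, 0;
     0, 0, 1, 0, 0, 1, 1, 0;
     0, 0, 0, 1, 0, 0, 0, 1;
     0, 0, 0, 0, 1, 0, 0, 0;
     0, 0, 0, 0, 0, 1, 0, 0;
     0, 0, 0, 0, 0, 0, 1, 0;
     0, 0, 0, 0, 0, 0, 0, 1]

def TbMat : Matrix (Fin 8) (Fin 8) ℝ :=
  !![1, 0, 0, 0, 0, 0, 0, 0;
     0, 1, 0, 0, 0, 0, 0, 0;
     0, 0, 1, 0, 0, 0, 0, 0;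
     0, 0, 0, 1, 0, 0, 0, 0;
     1, 1, 0, 0, 1, 0, 0, 0;
     1, 1, 0, 0, 0, 1, 0, 0;
     0, 0, 1, 1, 0, 0, 1, 0;
     0, 0, 1, 1, 0, 0, 0, 1]

@[simp] lemma cons_val_five' {α : Type*} {m : ℕ} (x : α) (u : Fin (m+5) → α) :
    Matrix.vecCons x u 5 = Matrix.vecHead (Matrix.vecTail (Matrix.vecTail (Matrix.vecTail (Matrix.vecTail u)))) := rfl
@[simp] lemma cons_val_six' {α : Type*} {m : ℕ} (x : α) (u : Fin (m+6) → α) :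
    Matrix.vecCons x u 6 = Matrix.vecHead (Matrix.vecTail (Matrix.vecTail (Matrix.vecTail (Matrix.vecTail (Matrix.vecTail u))))) := rfl
@[simp] lemma cons_val_seven' {α : Type*} {m : ℕ} (x : α) (u : Fin (m+7) → α) :
    Matrix.vecCons x u 7 = Matrix.vecHead (Matrix.vecTail (Matrix.vecTail (Matrix.vecTail (Matrix.vecTail (Matrix.vecTail (Matrix.vecTail u)))))) := rfl

lemma fse_0 : (finSumFinEquiv (m:=4) (n:=4)).symm (0 : Fin 8) = Sum.inl 0 := rfl
lemma fse_1 : (finSumFinEquiv (m:=4) (n:=4)).symm (1 : Fin 8) = Sum.inl 1 := rfl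
lemma fse_2 : (finSumFinEquiv (m:=4) (n:=4)).symm (2 : Fin 8) = Sum.inl 2 := rfl
lemma fse_3 : (finSumFinEquiv (m:=4) (n:=4)).symm (3 : Fin 8) = Sum.inl 3 := rfl
lemma fse_4 : (finSumFinEquiv (m:=4) (n:=4)).symm (4 : Fin 8) = Sum.inr 0 := rfl
lemma fse_5 : (finSumFinEquiv (m:=4) (n:=4)).symm (5 : Fin 8) = Sum.inr 1 := rfl
lemma fse_6 : (finSumFinEquiv (m:=4) (n:=4)).symm (6 : Fin 8) = Sum.inr 2 := rfl
lemma fse_7 : (finSumFinEquiv (m:=4) (n:=4)).symm (7 : Fin 8) = Sum.inr 3 := rfl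

set_option maxHeartbeats 4000000 in
theorem stmt_14 :
    ∀ x : ℝ,
      (x • (1 : Matrix (Fin 8) (Fin 8) ℝ) - TaMat * TbMat).det =
        (x - 1)^4 * (x^4 - 8*x^3 + 17*x^2 - 8*x + 1) := by
  intro x
  have h : x • (1 : Matrix (Fin 8) (Fin 8) ℝ) - TaMat * TbMat =
      !![x-2, -1, 0, 0, -1, 0, 0, 0;
         -1, x-2, -1, -1, 0, -1, -1, 0;
         -1, -1, x-2, -1, 0, -1, -1, 0;
         0, 0, -1, x-2, 0, 0, 0, -1;
         -1, -1, 0, 0, x-1, 0, 0, 0;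
         -1, -1, 0, 0, 0, x-1, 0, 0;
         0, 0, -1, -1, 0, 0, x-1, 0;
         0, 0, -1, -1, 0, 0, 0, x-1] := by
    ext i j
    fin_cases i <;> fin_cases j <;>
      simp [TaMat, TbMat, Matrix.mul_apply, Fin.sum_univ_eight, Matrix.one_apply] <;>
      norm_num [Matrix.vecHead, Matrix.vecTail]
  rw [h]
  rcases eq_or_ne x 1 with hx | hx
  · subst hx
    rw [Matrix.det_zero_of_row_eq (i := 4) (j := 5) (by decide)
      (by funext j; fin_cases j <;> simp [Matrix.vecHead, Matrix.vecTail])]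
    ring
  · -- block matrix approach
    set A : Matrix (Fin 4) (Fin 4) ℝ :=
      !![x-2, -1, 0, 0; -1, x-2, -1, -1; -1, -1, x-2, -1; 0, 0, -1, x-2] with hA
    set B : Matrix (Fin 4) (Fin 4) ℝ :=
      !![-1, 0, 0, 0; 0, -1, -1, 0; 0, -1, -1, 0; 0, 0, 0, -1] with hB
    set C : Matrix (Fin 4) (Fin 4) ℝ :=
      !![-1, -1, 0, 0; -1, -1, 0, 0; 0, 0, -1, -1; 0, 0, -1, -1] with hC
    set D : Matrix (Fin 4) (Fin 4) ℝ := (x - 1) • 1 with hD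
    have hx1 : x - 1 ≠ 0 := sub_ne_zero.mpr hx
    have hblk : (!![x-2, -1, 0, 0, -1, 0, 0, 0;
         -1, x-2, -1, -1, 0, -1, -1, 0;
         -1, -1, x-2, -1, 0, -1, -1, 0;
         0, 0, -1, x-2, 0, 0, 0, -1;
         -1, -1, 0, 0, x-1, 0, 0, 0;
         -1, -1, 0, 0, 0, x-1, 0, 0;
         0, 0, -1, -1, 0, 0, x-1, 0;
         0, 0, -1, -1, 0, 0, 0, x-1] : Matrix (Fin 8) (Fin 8) ℝ) =
        (Matrix.fromBlocks A B C D).submatrix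
          (finSumFinEquiv (m := 4) (n := 4)).symm (finSumFinEquiv (m := 4) (n := 4)).symm := by
      ext i j
      fin_cases i <;> fin_cases j <;>
        simp [hA, hB, hC, hD, Matrix.one_apply, Matrix.fromBlocks, fse_0, fse_1, fse_2, fse_3,
          fse_4, fse_5, fse_6, fse_7, Matrix.vecHead, Matrix.vecTail]
    rw [hblk, Matrix.det_submatrix_equiv_self]
    have e1 : (x - 1) * (x - 1)⁻¹ = 1 := mul_inv_cancel₀ hx1
    have e2 : (x - 1)⁻¹ * (x - 1) = 1 := inv_mul_cancel₀ hx1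
    haveI : Invertible D := by
      refine ⟨(x - 1)⁻¹ • 1, ?_, ?_⟩ <;> simp [hD, smul_smul, e1, e2]
    rw [Matrix.det_fromBlocks₂₂]
    have hinv : (⅟ D : Matrix (Fin 4) (Fin 4) ℝ) = (x - 1)⁻¹ • 1 := by
      apply invOf_eq_right_inv
      simp [hD, smul_smul, e1, e2]
    have hdetD : D.det = (x - 1) ^ 4 := by
      simp [hD, Matrix.det_smul]
    have hBC : B * ((x - 1)⁻¹ • 1) * C = (x-1)⁻¹ • (B * C) := by
      rw [Matrix.mul_smul, Matrix.mul_one, Matrix.smul_mul]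
    rw [hdetD, hinv, hBC]
    have hBCval : B * C = !![1, 1, 0, 0; 1, 1, 1, 1; 1, 1, 1, 1; 0, 0, 1, 1] := by
      ext i j
      fin_cases i <;> fin_cases j <;>
        simp [hB, hC, Matrix.mul_apply, Fin.sum_univ_four, Matrix.vecHead, Matrix.vecTail] <;>
        norm_num [Matrix.vecHead, Matrix.vecTail]
    rw [hBCval]
    have hmat : A - (x-1)⁻¹ • !![(1:ℝ), 1, 0, 0; 1, 1, 1, 1; 1, 1, 1, 1; 0, 0, 1, 1] =
        !![x-2-(x-1)⁻¹, -1-(x-1)⁻¹, 0, 0;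
           -1-(x-1)⁻¹, x-2-(x-1)⁻¹, -1-(x-1)⁻¹, -1-(x-1)⁻¹;
           -1-(x-1)⁻¹, -1-(x-1)⁻¹, x-2-(x-1)⁻¹, -1-(x-1)⁻¹;
           0, 0, -1-(x-1)⁻¹, x-2-(x-1)⁻¹] := by
      ext i j
      fin_cases i <;> fin_cases j <;>
        simp [hA, Matrix.vecHead, Matrix.vecTail] <;> ring
    rw [hmat]
    simp [Matrix.det_succ_row_zero, Fin.sum_univ_succ, Matrix.det_fin_three, Matrix.submatrix_apply, Fin.succAbove, Matrix.vecHead, Matrix.vecTail]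
    field_simp
    ring_nf
    tauto
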